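/- Although the Gödel metric satisfies R·R = Q(S,R), at every point of ℝ⁴ there is NO nonzero covector θ such that θ_m R_{hijk} + θ_j R_{hikm} + θ_k R_{himj} = 0 for all indices h, i, j, k, m (i.e. the sufficient condition of Deszcz–Grycak for R·R = Q(S,R) fails for the Gödel metric). -/

import Mathlib

noncomputable section

open scoped BigOperators

/-- A point of `ℝⁿ`. -/
abbrev Pt (n : ℕ) := Fin n → ℝ
/-- A (0,2)-tensor field on `ℝⁿ`, given by its components. -/
abbrev Ten2 (n : ℕ) := Pt n → Fin n → Fin n → ℝ
/-- A (0,4)-tensor field on `ℝⁿ`, given by its components. -/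
abbrev Ten4 (n : ℕ) := Pt n → Fin n → Fin n → Fin n → Fin n → ℝ

variable {n : ℕ}

/-- Partial derivative `∂ᵢ f` at `x`. -/
def pderiv (i : Fin n) (f : Pt n → ℝ) (x : Pt n) : ℝ :=
  fderiv ℝ f x (Pi.single i 1)

/-- Components `g^{ij}` of the inverse of the metric. -/
def ginv (g : Ten2 n) (x : Pt n) (i j : Fin n) : ℝ :=
  (Matrix.of (g x))⁻¹ i j

/-- Christoffel symbols of the second kind, `Γ^h_{ij}` as a function of the point. -/
def christoffel (g : Ten2 n) (h i j : Fin n) (x : Pt n) : ℝ :=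
  (1/2) * ∑ l, ginv g x h l *
    (pderiv i (fun y => g y l j) x + pderiv j (fun y => g y i l) x - pderiv l (fun y => g y i j) x)

/-- Curvature components `R^h_{ijk}`. -/
def curvUp (g : Ten2 n) (h i j k : Fin n) (x : Pt n) : ℝ :=
  pderiv j (christoffel g h i k) x - pderiv k (christoffel g h i j) x
    + ∑ l, christoffel g h j l x * christoffel g l i k x
    - ∑ l, christoffel g h k l x * christoffel g l i j x

/-- The (0,4) Riemann–Christoffel curvature tensor `R_{hijk} = g_{hl} R^l_{ijk}`. -/
def riemann (g : Ten2 n) : Ten4 n := fun x h i j k => ∑ l, g x h l * curvUp g l i j k x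

/-- The Ricci tensor `S_{ij} = R^k_{ikj}`. -/
def ricci (g : Ten2 n) : Ten2 n := fun x i j => ∑ k, curvUp g k i k j x

/-- The scalar curvature `κ = g^{ij} S_{ij}`. -/
def scalarCurv (g : Ten2 n) (x : Pt n) : ℝ := ∑ i, ∑ j, ginv g x i j * ricci g x i j

/-- Components `S_{ij,k}` of the covariant derivative of the Ricci tensor. -/
def ricciCov (g : Ten2 n) (x : Pt n) (i j k : Fin n) : ℝ :=
  pderiv k (fun y => ricci g y i j) x
    - ∑ l, christoffel g l k i x * ricci g x l j
    - ∑ l, christoffel g l k j x * ricci g x i l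

/-- The Kulkarni–Nomizu product of two symmetric (0,2)-tensors. -/
def kn (A B : Ten2 n) : Ten4 n := fun x X1 X2 X3 X4 =>
  A x X1 X4 * B x X2 X3 + A x X2 X3 * B x X1 X4 - A x X1 X3 * B x X2 X4 - A x X2 X4 * B x X1 X3

/-- The Gaussian curvature tensor `G = (1/2) g ∧ g`. -/
def Gten (g : Ten2 n) : Ten4 n := fun x i j k l => (1/2) * kn g g x i j k l

/-- The Weyl conformal curvature tensor
`C = R − (1/(n−2)) g∧S + (κ/((n−2)(n−1))) G`. -/
def weyl (g : Ten2 n) : Ten4 n := fun x h i j k =>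
  riemann g x h i j k - (1/((n:ℝ)-2)) * kn g (ricci g) x h i j k
    + (scalarCurv g x / (((n:ℝ)-2)*((n:ℝ)-1))) * Gten g x h i j k

/-- The conharmonic curvature tensor `conh(R) = R − (1/(n−2)) g∧S`. -/
def conh (g : Ten2 n) : Ten4 n := fun x h i j k =>
  riemann g x h i j k - (1/((n:ℝ)-2)) * kn g (ricci g) x h i j k

/-- The concircular curvature tensor `K = R − (κ/(n(n−1))) G`. -/
def concirc (g : Ten2 n) : Ten4 n := fun x h i j k =>
  riemann g x h i j k - (scalarCurv g x / ((n:ℝ)*((n:ℝ)-1))) * Gten g x h i j k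

/-- The (0,6)-tensor `T·T'` for (0,4)-tensors `T, T'`: the curvature-type tensor `T`
acts as a derivation (through the endomorphisms `𝒯(X,Y)` with
`g(𝒯(X,Y)Z,W) = T(X,Y,Z,W)`) on the (0,4)-tensor `T'`. -/
def dot44 (g : Ten2 n) (T T' : Ten4 n) :
    Pt n → Fin n → Fin n → Fin n → Fin n → Fin n → Fin n → ℝ :=
  fun x h i j k l m =>
  -(∑ r, ∑ s, ginv g x r s *
    (T x l m h s * T' x r i j k + T x l m i s * T' x h r j k
      + T x l m j s * T' x h i r k + T x l m k s * T' x h i j r))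

/-- The (0,4)-tensor `T·A` for a (0,4)-tensor `T` acting on a (0,2)-tensor `A`. -/
def dot42 (g : Ten2 n) (T : Ten4 n) (A : Ten2 n) :
    Pt n → Fin n → Fin n → Fin n → Fin n → ℝ :=
  fun x i j l m =>
  -(∑ r, ∑ s, ginv g x r s * (T x l m i s * A x r j + T x l m j s * A x i r))

/-- The Tachibana tensor `Q(A,T')` of a symmetric (0,2)-tensor `A`
and a (0,4)-tensor `T'`, built from the endomorphisms `X ∧_A Y`. -/
def tach4 (A : Ten2 n) (T' : Ten4 n) :
    Pt n → Fin n → Fin n → Fin n → Fin n → Fin n → Fin n → ℝ :=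
  fun x h i j k l m =>
  -((A x m h * T' x l i j k - A x l h * T' x m i j k)
    + (A x m i * T' x h l j k - A x l i * T' x h m j k)
    + (A x m j * T' x h i l k - A x l j * T' x h i m k)
    + (A x m k * T' x h i j l - A x l k * T' x h i j m))

/-- The Tachibana tensor `Q(A,B)` of a symmetric (0,2)-tensor `A`
and a (0,2)-tensor `B`. -/
def tach2 (A B : Ten2 n) : Pt n → Fin n → Fin n → Fin n → Fin n → ℝ :=
  fun x i j l m =>
  -((A x m i * B x l j - A x l i * B x m j) + (A x m j * B x i l - A x l j * B x i m))

/-- The Gödel metric on `ℝ⁴`: `g₁₁ = −a²`, `g₂₂ = (a²/2)e^{2x¹}`, `g₃₃ = −a²`,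
`g₄₄ = a²`, `g₂₄ = g₄₂ = a²e^{x¹}`, all other components zero. -/
def godel (a : ℝ) : Ten2 4 := fun x i j =>
  ![![-a^2, 0, 0, 0],
    ![0, a^2/2 * Real.exp (2 * x 0), 0, a^2 * Real.exp (x 0)],
    ![0, 0, -a^2, 0],
    ![0, a^2 * Real.exp (x 0), 0, a^2]] i j


set_option linter.unreachableTactic false
set_option linter.unusedTactic false
set_option linter.unnecessarySeqFocus false

-- pderiv lemmas
lemma hasF_proj (x : Pt 4) : HasFDerivAt (fun y : Pt 4 => y 0)
    (ContinuousLinearMap.proj 0 : (Fin 4 → ℝ) →L[ℝ] ℝ) x := by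
  exact (ContinuousLinearMap.proj (R := ℝ) (φ := fun _ : Fin 4 => ℝ) 0).hasFDerivAt (x := x)

@[simp] lemma pderiv_const (i : Fin 4) (c : ℝ) (x : Pt 4) :
    pderiv i (fun _ : Pt 4 => c) x = 0 := by
  simp [pderiv]

@[simp] lemma pderiv_cexp2 (i : Fin 4) (c : ℝ) (x : Pt 4) :
    pderiv i (fun y : Pt 4 => c * Real.exp (2 * y 0)) x =
      (if i = 0 then 2 * c * Real.exp (2 * x 0) else 0) := by
  have h1 : HasFDerivAt (fun y : Pt 4 => 2 * y 0)
      ((2:ℝ) • (ContinuousLinearMap.proj 0 : (Fin 4 → ℝ) →L[ℝ] ℝ)) x := (hasF_proj x).const_mul 2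
  have h2 := (h1.exp).const_mul c
  rw [pderiv, h2.fderiv]
  by_cases hi : i = 0 <;> simp [hi, Pi.single_apply, Ne.symm] <;> first | ring | simp [fun h => (hi h.symm : False)]

@[simp] lemma pderiv_cexp1 (i : Fin 4) (c : ℝ) (x : Pt 4) :
    pderiv i (fun y : Pt 4 => c * Real.exp (y 0)) x =
      (if i = 0 then c * Real.exp (x 0) else 0) := by
  have h2 := ((hasF_proj x).exp).const_mul c
  rw [pderiv, h2.fderiv]
  by_cases hi : i = 0 <;> simp [hi, Pi.single_apply] <;> first | ring | simp [fun h => (hi h.symm : False)]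

@[simp] lemma pderiv_nexpneg (i : Fin 4) (x : Pt 4) :
    pderiv i (fun y : Pt 4 => -Real.exp (-y 0)) x =
      (if i = 0 then Real.exp (-x 0) else 0) := by
  have h1 : HasFDerivAt (fun y : Pt 4 => -y 0)
      (-(ContinuousLinearMap.proj 0 : (Fin 4 → ℝ) →L[ℝ] ℝ)) x := (hasF_proj x).neg
  have h2 := (h1.exp).neg
  rw [pderiv, show (fun y : Pt 4 => -Real.exp (-y 0)) = -fun y => Real.exp (-y 0) from rfl, h2.fderiv]
  by_cases hi : i = 0 <;> simp [hi, Pi.single_apply] <;> first | ring | simp [fun h => (hi h.symm : False)]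

-- inverse metric
lemma ginv_godel (a : ℝ) (ha : a ≠ 0) (x : Pt 4) (i j : Fin 4) :
    ginv (godel a) x i j =
      ![![-(a^2)⁻¹, 0, 0, 0],
        ![0, -2 * (a^2 * Real.exp (x 0)^2)⁻¹, 0, 2 * (a^2 * Real.exp (x 0))⁻¹],
        ![0, 0, -(a^2)⁻¹, 0],
        ![0, 2 * (a^2 * Real.exp (x 0))⁻¹, 0, -(a^2)⁻¹]] i j := by
  have hE := Real.exp_ne_zero (x 0)
  have ha2 : (a^2 : ℝ) ≠ 0 := pow_ne_zero 2 ha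
  have key : Matrix.of (godel a x) *
      (Matrix.of ![![-(a^2)⁻¹, 0, 0, 0],
        ![0, -2 * (a^2 * Real.exp (x 0)^2)⁻¹, 0, 2 * (a^2 * Real.exp (x 0))⁻¹],
        ![0, 0, -(a^2)⁻¹, 0],
        ![0, 2 * (a^2 * Real.exp (x 0))⁻¹, 0, -(a^2)⁻¹]]) = 1 := by
    have h2x : Real.exp (2 * x 0) = Real.exp (x 0)^2 := by
      rw [pow_two, ← Real.exp_add]; ring_nf
    ext i j
    fin_cases i <;> fin_cases j <;>
      simp [Matrix.mul_apply, Fin.sum_univ_four, godel, Matrix.one_apply, h2x,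
        Matrix.cons_val_three, Matrix.cons_val_two, Matrix.vecHead, Matrix.vecTail] <;>
      field_simp <;> ring
  rw [ginv, Matrix.inv_eq_right_inv key]
  simp

-- Christoffel table: entries as functions of the point
def Γtab : Fin 4 → Fin 4 → Fin 4 → Pt 4 → ℝ := fun h i j =>
  ![![![fun _ => 0, fun _ => 0, fun _ => 0, fun _ => 0],
     ![fun _ => 0, fun y => (1/2 : ℝ) * Real.exp (2 * y 0), fun _ => 0, fun y => (1/2 : ℝ) * Real.exp (y 0)],
     ![fun _ => 0, fun _ => 0, fun _ => 0, fun _ => 0],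
     ![fun _ => 0, fun y => (1/2 : ℝ) * Real.exp (y 0), fun _ => 0, fun _ => 0]],
    ![![fun _ => 0, fun _ => 0, fun _ => 0, fun y => -Real.exp (-y 0)],
     ![fun _ => 0, fun _ => 0, fun _ => 0, fun _ => 0],
     ![fun _ => 0, fun _ => 0, fun _ => 0, fun _ => 0],
     ![fun y => -Real.exp (-y 0), fun _ => 0, fun _ => 0, fun _ => 0]],
    ![![fun _ => 0, fun _ => 0, fun _ => 0, fun _ => 0],
     ![fun _ => 0, fun _ => 0, fun _ => 0, fun _ => 0],
     ![fun _ => 0, fun _ => 0, fun _ => 0, fun _ => 0],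
     ![fun _ => 0, fun _ => 0, fun _ => 0, fun _ => 0]],
    ![![fun _ => 0, fun y => (1/2 : ℝ) * Real.exp (y 0), fun _ => 0, fun _ => (1:ℝ)],
     ![fun y => (1/2 : ℝ) * Real.exp (y 0), fun _ => 0, fun _ => 0, fun _ => 0],
     ![fun _ => 0, fun _ => 0, fun _ => 0, fun _ => 0],
     ![fun _ => (1:ℝ), fun _ => 0, fun _ => 0, fun _ => 0]]] h i j

set_option maxHeartbeats 2000000 in
lemma christoffel_godel (a : ℝ) (ha : a ≠ 0) (h i j : Fin 4) :
    christoffel (godel a) h i j = Γtab h i j := by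
  funext x
  have hE := Real.exp_ne_zero (x 0)
  have ha2 : (a^2 : ℝ) ≠ 0 := pow_ne_zero 2 ha
  have h2x : Real.exp (2 * x 0) = Real.exp (x 0)^2 := by
    rw [pow_two, ← Real.exp_add]; ring_nf
  have hnx : Real.exp (-x 0) = (Real.exp (x 0))⁻¹ := Real.exp_neg _
  have h2x' : Real.exp (x 0 * 2) = Real.exp (x 0)^2 := by rw [mul_comm]; exact h2x
  fin_cases h <;> fin_cases i <;> fin_cases j <;>
    (simp only [christoffel, Fin.sum_univ_four, ginv_godel a ha, godel, Γtab,
      Matrix.cons_val_zero, Matrix.cons_val_one, Matrix.head_cons, Matrix.tail_cons,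
      Matrix.cons_val,
      pderiv_const, pderiv_cexp1, pderiv_cexp2, h2x, hnx,
      Function.comp_apply, Fin.reduceFinMk]) <;>
    norm_num [Fin.ext_iff, h2x, h2x', hnx] <;> (try field_simp) <;> (try ring) <;>
    (try exact fun hh => absurd hh (by decide))

set_option maxHeartbeats 1000000 in
lemma riemann_1313 (a : ℝ) (ha : a ≠ 0) (x : Pt 4) :
    riemann (godel a) x 1 3 1 3 = -(a^2) * Real.exp (x 0)^2 / 4 := by
  have hE := Real.exp_ne_zero (x 0)
  have h2x : Real.exp (2 * x 0) = Real.exp (x 0)^2 := by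
    rw [pow_two, ← Real.exp_add]; ring_nf
  have hnx : Real.exp (-x 0) = (Real.exp (x 0))⁻¹ := Real.exp_neg _
  have h2x' : Real.exp (x 0 * 2) = Real.exp (x 0)^2 := by rw [mul_comm]; exact h2x
  simp only [riemann, curvUp, Fin.sum_univ_four, christoffel_godel a ha, godel, Γtab,
    Matrix.cons_val_zero, Matrix.cons_val_one, Matrix.head_cons, Matrix.tail_cons,
    Matrix.cons_val,
    pderiv_const, pderiv_cexp1, pderiv_cexp2, pderiv_nexpneg, Function.comp_apply, Function.comp]
  norm_num [Fin.ext_iff, h2x, h2x', hnx, Matrix.vecHead, Matrix.vecTail, Function.comp, pderiv_const]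
  try field_simp
  try ring
  try exact fun hh => absurd hh (by decide)

set_option maxHeartbeats 1000000 in
lemma riemann_1330 (a : ℝ) (ha : a ≠ 0) (x : Pt 4) :
    riemann (godel a) x 1 3 3 0 = 0 := by
  have hE := Real.exp_ne_zero (x 0)
  have h2x : Real.exp (2 * x 0) = Real.exp (x 0)^2 := by
    rw [pow_two, ← Real.exp_add]; ring_nf
  have hnx : Real.exp (-x 0) = (Real.exp (x 0))⁻¹ := Real.exp_neg _
  have h2x' : Real.exp (x 0 * 2) = Real.exp (x 0)^2 := by rw [mul_comm]; exact h2x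
  simp only [riemann, curvUp, Fin.sum_univ_four, christoffel_godel a ha, godel, Γtab,
    Matrix.cons_val_zero, Matrix.cons_val_one, Matrix.head_cons, Matrix.tail_cons,
    Matrix.cons_val,
    pderiv_const, pderiv_cexp1, pderiv_cexp2, pderiv_nexpneg, Function.comp_apply, Function.comp]
  norm_num [Fin.ext_iff, h2x, h2x', hnx, Matrix.vecHead, Matrix.vecTail, Function.comp, pderiv_const]
  try field_simp
  try ring
  try exact fun hh => absurd hh (by decide)

set_option maxHeartbeats 1000000 in
lemma riemann_1301 (a : ℝ) (ha : a ≠ 0) (x : Pt 4) :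
    riemann (godel a) x 1 3 0 1 = 0 := by
  have hE := Real.exp_ne_zero (x 0)
  have h2x : Real.exp (2 * x 0) = Real.exp (x 0)^2 := by
    rw [pow_two, ← Real.exp_add]; ring_nf
  have hnx : Real.exp (-x 0) = (Real.exp (x 0))⁻¹ := Real.exp_neg _
  have h2x' : Real.exp (x 0 * 2) = Real.exp (x 0)^2 := by rw [mul_comm]; exact h2x
  simp only [riemann, curvUp, Fin.sum_univ_four, christoffel_godel a ha, godel, Γtab,
    Matrix.cons_val_zero, Matrix.cons_val_one, Matrix.head_cons, Matrix.tail_cons,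
    Matrix.cons_val,
    pderiv_const, pderiv_cexp1, pderiv_cexp2, pderiv_nexpneg, Function.comp_apply, Function.comp]
  norm_num [Fin.ext_iff, h2x, h2x', hnx, Matrix.vecHead, Matrix.vecTail, Function.comp, pderiv_const]
  try field_simp
  try ring
  try exact fun hh => absurd hh (by decide)

set_option maxHeartbeats 1000000 in
lemma riemann_0303 (a : ℝ) (ha : a ≠ 0) (x : Pt 4) :
    riemann (godel a) x 0 3 0 3 = -(a^2) / 2 := by
  have hE := Real.exp_ne_zero (x 0)
  have h2x : Real.exp (2 * x 0) = Real.exp (x 0)^2 := by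
    rw [pow_two, ← Real.exp_add]; ring_nf
  have hnx : Real.exp (-x 0) = (Real.exp (x 0))⁻¹ := Real.exp_neg _
  have h2x' : Real.exp (x 0 * 2) = Real.exp (x 0)^2 := by rw [mul_comm]; exact h2x
  simp only [riemann, curvUp, Fin.sum_univ_four, christoffel_godel a ha, godel, Γtab,
    Matrix.cons_val_zero, Matrix.cons_val_one, Matrix.head_cons, Matrix.tail_cons,
    Matrix.cons_val,
    pderiv_const, pderiv_cexp1, pderiv_cexp2, pderiv_nexpneg, Function.comp_apply, Function.comp]
  norm_num [Fin.ext_iff, h2x, h2x', hnx, Matrix.vecHead, Matrix.vecTail, Function.comp, pderiv_const]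
  try field_simp
  try ring
  try exact fun hh => absurd hh (by decide)

set_option maxHeartbeats 1000000 in
lemma riemann_0332 (a : ℝ) (ha : a ≠ 0) (x : Pt 4) :
    riemann (godel a) x 0 3 3 2 = 0 := by
  have hE := Real.exp_ne_zero (x 0)
  have h2x : Real.exp (2 * x 0) = Real.exp (x 0)^2 := by
    rw [pow_two, ← Real.exp_add]; ring_nf
  have hnx : Real.exp (-x 0) = (Real.exp (x 0))⁻¹ := Real.exp_neg _
  have h2x' : Real.exp (x 0 * 2) = Real.exp (x 0)^2 := by rw [mul_comm]; exact h2x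
  simp only [riemann, curvUp, Fin.sum_univ_four, christoffel_godel a ha, godel, Γtab,
    Matrix.cons_val_zero, Matrix.cons_val_one, Matrix.head_cons, Matrix.tail_cons,
    Matrix.cons_val,
    pderiv_const, pderiv_cexp1, pderiv_cexp2, pderiv_nexpneg, Function.comp_apply, Function.comp]
  norm_num [Fin.ext_iff, h2x, h2x', hnx, Matrix.vecHead, Matrix.vecTail, Function.comp, pderiv_const]
  try field_simp
  try ring
  try exact fun hh => absurd hh (by decide)

set_option maxHeartbeats 1000000 in
lemma riemann_0320 (a : ℝ) (ha : a ≠ 0) (x : Pt 4) :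
    riemann (godel a) x 0 3 2 0 = 0 := by
  have hE := Real.exp_ne_zero (x 0)
  have h2x : Real.exp (2 * x 0) = Real.exp (x 0)^2 := by
    rw [pow_two, ← Real.exp_add]; ring_nf
  have hnx : Real.exp (-x 0) = (Real.exp (x 0))⁻¹ := Real.exp_neg _
  have h2x' : Real.exp (x 0 * 2) = Real.exp (x 0)^2 := by rw [mul_comm]; exact h2x
  simp only [riemann, curvUp, Fin.sum_univ_four, christoffel_godel a ha, godel, Γtab,
    Matrix.cons_val_zero, Matrix.cons_val_one, Matrix.head_cons, Matrix.tail_cons,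
    Matrix.cons_val,
    pderiv_const, pderiv_cexp1, pderiv_cexp2, pderiv_nexpneg, Function.comp_apply, Function.comp]
  norm_num [Fin.ext_iff, h2x, h2x', hnx, Matrix.vecHead, Matrix.vecTail, Function.comp, pderiv_const]
  try field_simp
  try ring
  try exact fun hh => absurd hh (by decide)

set_option maxHeartbeats 1000000 in
lemma riemann_0331 (a : ℝ) (ha : a ≠ 0) (x : Pt 4) :
    riemann (godel a) x 0 3 3 1 = 0 := by
  have hE := Real.exp_ne_zero (x 0)
  have h2x : Real.exp (2 * x 0) = Real.exp (x 0)^2 := by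
    rw [pow_two, ← Real.exp_add]; ring_nf
  have hnx : Real.exp (-x 0) = (Real.exp (x 0))⁻¹ := Real.exp_neg _
  have h2x' : Real.exp (x 0 * 2) = Real.exp (x 0)^2 := by rw [mul_comm]; exact h2x
  simp only [riemann, curvUp, Fin.sum_univ_four, christoffel_godel a ha, godel, Γtab,
    Matrix.cons_val_zero, Matrix.cons_val_one, Matrix.head_cons, Matrix.tail_cons,
    Matrix.cons_val,
    pderiv_const, pderiv_cexp1, pderiv_cexp2, pderiv_nexpneg, Function.comp_apply, Function.comp]
  norm_num [Fin.ext_iff, h2x, h2x', hnx, Matrix.vecHead, Matrix.vecTail, Function.comp, pderiv_const]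
  try field_simp
  try ring
  try exact fun hh => absurd hh (by decide)

set_option maxHeartbeats 1000000 in
lemma riemann_0310 (a : ℝ) (ha : a ≠ 0) (x : Pt 4) :
    riemann (godel a) x 0 3 1 0 = a^2 * Real.exp (x 0) / 2 := by
  have hE := Real.exp_ne_zero (x 0)
  have h2x : Real.exp (2 * x 0) = Real.exp (x 0)^2 := by
    rw [pow_two, ← Real.exp_add]; ring_nf
  have hnx : Real.exp (-x 0) = (Real.exp (x 0))⁻¹ := Real.exp_neg _
  have h2x' : Real.exp (x 0 * 2) = Real.exp (x 0)^2 := by rw [mul_comm]; exact h2x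
  simp only [riemann, curvUp, Fin.sum_univ_four, christoffel_godel a ha, godel, Γtab,
    Matrix.cons_val_zero, Matrix.cons_val_one, Matrix.head_cons, Matrix.tail_cons,
    Matrix.cons_val,
    pderiv_const, pderiv_cexp1, pderiv_cexp2, pderiv_nexpneg, Function.comp_apply, Function.comp]
  norm_num [Fin.ext_iff, h2x, h2x', hnx, Matrix.vecHead, Matrix.vecTail, Function.comp, pderiv_const]
  try field_simp
  try ring
  try exact fun hh => absurd hh (by decide)

set_option maxHeartbeats 1000000 in
lemma riemann_0101 (a : ℝ) (ha : a ≠ 0) (x : Pt 4) :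
    riemann (godel a) x 0 1 0 1 = -(3 * a^2 * Real.exp (x 0)^2) / 4 := by
  have hE := Real.exp_ne_zero (x 0)
  have h2x : Real.exp (2 * x 0) = Real.exp (x 0)^2 := by
    rw [pow_two, ← Real.exp_add]; ring_nf
  have hnx : Real.exp (-x 0) = (Real.exp (x 0))⁻¹ := Real.exp_neg _
  have h2x' : Real.exp (x 0 * 2) = Real.exp (x 0)^2 := by rw [mul_comm]; exact h2x
  simp only [riemann, curvUp, Fin.sum_univ_four, christoffel_godel a ha, godel, Γtab,
    Matrix.cons_val_zero, Matrix.cons_val_one, Matrix.head_cons, Matrix.tail_cons,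
    Matrix.cons_val,
    pderiv_const, pderiv_cexp1, pderiv_cexp2, pderiv_nexpneg, Function.comp_apply, Function.comp]
  norm_num [Fin.ext_iff, h2x, h2x', hnx, Matrix.vecHead, Matrix.vecTail, Function.comp, pderiv_const]
  try field_simp
  try ring
  try exact fun hh => absurd hh (by decide)

set_option maxHeartbeats 1000000 in
lemma riemann_0113 (a : ℝ) (ha : a ≠ 0) (x : Pt 4) :
    riemann (godel a) x 0 1 1 3 = 0 := by
  have hE := Real.exp_ne_zero (x 0)
  have h2x : Real.exp (2 * x 0) = Real.exp (x 0)^2 := by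
    rw [pow_two, ← Real.exp_add]; ring_nf
  have hnx : Real.exp (-x 0) = (Real.exp (x 0))⁻¹ := Real.exp_neg _
  have h2x' : Real.exp (x 0 * 2) = Real.exp (x 0)^2 := by rw [mul_comm]; exact h2x
  simp only [riemann, curvUp, Fin.sum_univ_four, christoffel_godel a ha, godel, Γtab,
    Matrix.cons_val_zero, Matrix.cons_val_one, Matrix.head_cons, Matrix.tail_cons,
    Matrix.cons_val,
    pderiv_const, pderiv_cexp1, pderiv_cexp2, pderiv_nexpneg, Function.comp_apply, Function.comp]
  norm_num [Fin.ext_iff, h2x, h2x', hnx, Matrix.vecHead, Matrix.vecTail, Function.comp, pderiv_const]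
  try field_simp
  try ring
  try exact fun hh => absurd hh (by decide)

set_option maxHeartbeats 1000000 in
lemma riemann_0130 (a : ℝ) (ha : a ≠ 0) (x : Pt 4) :
    riemann (godel a) x 0 1 3 0 = a^2 * Real.exp (x 0) / 2 := by
  have hE := Real.exp_ne_zero (x 0)
  have h2x : Real.exp (2 * x 0) = Real.exp (x 0)^2 := by
    rw [pow_two, ← Real.exp_add]; ring_nf
  have hnx : Real.exp (-x 0) = (Real.exp (x 0))⁻¹ := Real.exp_neg _
  have h2x' : Real.exp (x 0 * 2) = Real.exp (x 0)^2 := by rw [mul_comm]; exact h2x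
  simp only [riemann, curvUp, Fin.sum_univ_four, christoffel_godel a ha, godel, Γtab,
    Matrix.cons_val_zero, Matrix.cons_val_one, Matrix.head_cons, Matrix.tail_cons,
    Matrix.cons_val,
    pderiv_const, pderiv_cexp1, pderiv_cexp2, pderiv_nexpneg, Function.comp_apply, Function.comp]
  norm_num [Fin.ext_iff, h2x, h2x', hnx, Matrix.vecHead, Matrix.vecTail, Function.comp, pderiv_const]
  try field_simp
  try ring
  try exact fun hh => absurd hh (by decide)


/-- At every point of the Gödel spacetime there is no nonzero
covector `θ` with `θ_m R_{hijk} + θ_j R_{hikm} + θ_k R_{himj} = 0` for all indices;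
i.e. the Deszcz–Grycak sufficient condition for `R·R = Q(S,R)` fails. -/
theorem godel_no_cyclic_covector (a : ℝ) (ha : 0 < a) :
    ∀ x : Pt 4, ¬ ∃ θ : Fin 4 → ℝ, θ ≠ 0 ∧
      ∀ h i j k m : Fin 4,
        θ m * riemann (godel a) x h i j k + θ j * riemann (godel a) x h i k m
          + θ k * riemann (godel a) x h i m j = 0 := by
  intro x ⟨θ, hθne, H⟩
  have ha' : a ≠ 0 := ne_of_gt ha
  have hE : (0:ℝ) < Real.exp (x 0) := Real.exp_pos _
  have e1 := H 1 3 1 3 0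
  rw [riemann_1313 a ha' x, riemann_1330 a ha' x, riemann_1301 a ha' x] at e1
  have e2 := H 0 3 0 3 2
  rw [riemann_0303 a ha' x, riemann_0332 a ha' x, riemann_0320 a ha' x] at e2
  have e3 := H 0 3 0 3 1
  rw [riemann_0303 a ha' x, riemann_0331 a ha' x, riemann_0310 a ha' x] at e3
  have e4 := H 0 1 0 1 3
  rw [riemann_0101 a ha' x, riemann_0113 a ha' x, riemann_0130 a ha' x] at e4
  have hc : a^2 * Real.exp (x 0)^2 ≠ 0 := by positivity
  have hc2 : (a^2 : ℝ) ≠ 0 := by positivity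
  have h0 : θ 0 = 0 := by
    have h2 : θ 0 * (a^2 * Real.exp (x 0)^2) = 0 := by linear_combination (-4) * e1
    exact (mul_eq_zero.mp h2).resolve_right hc
  have h2' : θ 2 = 0 := by
    have h2 : θ 2 * (a^2 : ℝ) = 0 := by linear_combination (-2) * e2
    exact (mul_eq_zero.mp h2).resolve_right hc2
  have h3 : θ 3 = 0 := by
    have h2 : θ 3 * (a^2 * Real.exp (x 0)^2) = 0 := by
      linear_combination (-4) * e4 + (-4 * Real.exp (x 0)) * e3
    exact (mul_eq_zero.mp h2).resolve_right hc
  have h1 : θ 1 = 0 := by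
    have h2 : θ 1 * (a^2 : ℝ) = 0 := by
      linear_combination (-2) * e3 + (a^2 * Real.exp (x 0)) * h3
    exact (mul_eq_zero.mp h2).resolve_right hc2
  exact hθne (funext fun i => by fin_cases i <;> simp_all)
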